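/- arXiv:2011.01078 — 2 statements merged into one kernel-verified Lean document; each statement's English description precedes it below -/
import Mathlib

section
/- For odd integers m ≥ n ≥ 3, the Italian domination number of the directed Cartesian product C_m □ C_n equals m(n+1)/2. -/
/-- Adjacency in the underlying (toroidal grid) graph of `C_m □ C_n`:
two vertices are joined iff they differ by `(±1,0)` or `(0,±1)`. -/
def Adj {m n : ℕ} (u v : ZMod m × ZMod n) : Prop :=
  v = u + (1, 0) ∨ v = u + (0, 1) ∨ u = v + (1, 0) ∨ u = v + (0, 1)

/-- A set of vertices is independent if no two of its members are adjacent. -/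
def Indep {m n : ℕ} (S : Finset (ZMod m × ZMod n)) : Prop :=
  ∀ u ∈ S, ∀ v ∈ S, ¬ Adj u v

/-- An Italian dominating function on the digraph `C_m □ C_n`
(arcs `(i,j) → (i+1,j)` and `(i,j) → (i,j+1)`): every vertex assigned `0`
has in-neighbour values summing to at least `2`. -/
def ItalianDF {m n : ℕ} (f : ZMod m × ZMod n → ℕ) : Prop :=
  (∀ v, f v ≤ 2) ∧ ∀ v, f v = 0 → 2 ≤ f (v.1 - 1, v.2) + f (v.1, v.2 - 1)

/-- The set of weights of Italian dominating functions on `C_m □ C_n`. -/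
def weights (m n : ℕ) [NeZero m] [NeZero n] : Set ℕ :=
  {w | ∃ f : ZMod m × ZMod n → ℕ, ItalianDF f ∧ ∑ v, f v = w}

set_option linter.unusedSectionVars false


private lemma val_eq_of_cast {k : ℕ} [NeZero k] (x : ZMod k) (t : ℕ) (h : t < k)
    (he : (t : ZMod k) = x) : x.val = t := by
  subst he; exact ZMod.val_cast_of_lt h

private lemma cast_val_self {k : ℕ} [NeZero k] (x : ZMod k) : ((x.val : ℕ) : ZMod k) = x := by
  rw [ZMod.natCast_val, ZMod.cast_id]

private lemma range_even_card (N : ℕ) :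
    ((Finset.range N).filter (fun t => t % 2 = 0)).card = (N + 1) / 2 := by
  induction N with
  | zero => simp
  | succ k ih =>
    rw [Finset.range_add_one, Finset.filter_insert]
    by_cases h : k % 2 = 0
    · rw [if_pos h, Finset.card_insert_of_notMem (by simp)]
      omega
    · rw [if_neg h]; omega


private lemma zmod_even_card (n : ℕ) [NeZero n] :
    (Finset.univ.filter (fun x : ZMod n => x.val % 2 = 0)).card = (n + 1) / 2 := by
  rw [← range_even_card n]
  refine Finset.card_nbij' (fun x => x.val) (fun t => (t : ZMod n)) ?_ ?_ ?_ ?_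
  · intro a ha
    simp only [Finset.mem_coe, Finset.mem_filter, Finset.mem_univ, true_and] at ha ⊢
    simp only [Finset.mem_coe, Finset.mem_filter, Finset.mem_range]
    exact ⟨a.val_lt, ha⟩
  · intro t ht
    simp only [Finset.mem_coe, Finset.mem_filter, Finset.mem_range] at ht
    simp only [Finset.mem_coe, Finset.mem_filter, Finset.mem_univ, true_and]
    rw [ZMod.val_cast_of_lt ht.1]; exact ht.2
  · intro a _; exact cast_val_self a
  · intro t ht
    simp only [Finset.mem_coe, Finset.mem_filter, Finset.mem_range] at ht
    exact ZMod.val_cast_of_lt ht.1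


section upper
variable (m n : ℕ) [NeZero m] [NeZero n]

private def cc (t : ℕ) : ℕ := if 2 * t ≤ m + n then t else m + n - t

private def F : ZMod m × ZMod n → ℕ :=
  fun v => if ((v.2 - ((cc m n v.1.val : ℕ) : ZMod n)).val % 2 = 0) then 1 else 0

private lemma step (hn : 3 ≤ n) (hmn : n ≤ m) (hmo : Odd m) (hno : Odd n) (i : ZMod m) :
    ((cc m n (i - 1).val : ℕ) : ZMod n) = ((cc m n i.val : ℕ) : ZMod n) + 1 ∨
    ((cc m n (i - 1).val : ℕ) : ZMod n) = ((cc m n i.val : ℕ) : ZMod n) - 1 := by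
  obtain ⟨a, ha⟩ := hmo
  obtain ⟨b, hb⟩ := hno
  have hm3 : 3 ≤ m := le_trans hn hmn
  by_cases hi : i = 0
  · subst hi
    have hv : (0 - 1 : ZMod m).val = m - 1 := by
      apply val_eq_of_cast _ _ (by omega)
      rw [Nat.cast_sub (by omega), ZMod.natCast_self, Nat.cast_one]
    have hv0 : (0 : ZMod m).val = 0 := ZMod.val_zero
    have hc0 : cc m n 0 = 0 := by unfold cc; split_ifs <;> omega
    rcases eq_or_lt_of_le hmn with heq | hlt
    · -- m = n
      right
      have hc1 : cc m n (m - 1) = n - 1 := by unfold cc; split_ifs <;> omega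
      rw [hv, hv0, hc1, hc0, Nat.cast_sub (by omega), Nat.cast_zero,
        ZMod.natCast_self, Nat.cast_one]
    · -- n + 2 ≤ m
      left
      have hm2 : n + 2 ≤ m := by omega
      have hc1 : cc m n (m - 1) = n + 1 := by unfold cc; split_ifs <;> omega
      rw [hv, hv0, hc1, hc0, Nat.cast_add, ZMod.natCast_self, Nat.cast_zero, Nat.cast_one,
        zero_add]
  · have h1 : 1 ≤ i.val := by
      have := (ZMod.val_eq_zero i).not.mpr hi
      omega
    have hlt : i.val < m := i.val_lt
    have hv : (i - 1).val = i.val - 1 := by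
      apply val_eq_of_cast _ _ (by omega)
      rw [Nat.cast_sub h1, Nat.cast_one, cast_val_self]
    have hnat : cc m n (i.val - 1) = cc m n i.val + 1 ∨
        cc m n (i.val - 1) + 1 = cc m n i.val := by
      unfold cc; split_ifs <;> omega
    rw [hv]
    rcases hnat with h | h
    · left; rw [h, Nat.cast_add, Nat.cast_one]
    · right
      have := congrArg (fun t : ℕ => (t : ZMod n)) h
      simp only [Nat.cast_add, Nat.cast_one] at this
      exact eq_sub_of_add_eq this
end upper

section upper2
variable (m n : ℕ) [NeZero m] [NeZero n]

private lemma F_eq (i : ZMod m) (j : ZMod n) :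
    F m n (i, j) = if ((j - ((cc m n i.val : ℕ) : ZMod n)).val % 2 = 0) then 1 else 0 := rfl

private lemma F_IDF (hn : 3 ≤ n) (hmn : n ≤ m) (hmo : Odd m) (hno : Odd n) :
    ItalianDF (F m n) := by
  constructor
  · intro v; unfold F; split_ifs <;> omega
  · rintro ⟨i, j⟩ hv
    obtain ⟨b, hb⟩ := id hno
    rw [F_eq] at hv
    set c : ZMod n := ((cc m n i.val : ℕ) : ZMod n) with hc
    set x : ZMod n := j - c with hx
    have hodd : x.val % 2 = 1 := by
      by_cases h : x.val % 2 = 0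
      · rw [if_pos h] at hv; omega
      · omega
    have hxlt : x.val < n := x.val_lt
    have hx1 : 1 ≤ x.val := by omega
    have hxne : x.val ≠ n - 1 := by omega
    have hsub : (x - 1).val = x.val - 1 := by
      apply val_eq_of_cast _ _ (by omega)
      rw [Nat.cast_sub hx1, Nat.cast_one, cast_val_self]
    have hadd : (x + 1).val = x.val + 1 := by
      apply val_eq_of_cast _ _ (by omega)
      rw [Nat.cast_add, Nat.cast_one, cast_val_self]
    have h2 : F m n (i, j - 1) = 1 := by
      rw [F_eq, ← hc, show j - 1 - c = x - 1 by rw [hx]; ring, if_pos (by omega)]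
    have h1 : F m n (i - 1, j) = 1 := by
      rw [F_eq]
      rcases step m n hn hmn hmo hno i with h | h
      · rw [h, ← hc, show j - (c + 1) = x - 1 by rw [hx]; ring, if_pos (by omega)]
      · rw [h, ← hc, show j - (c - 1) = x + 1 by rw [hx]; ring, if_pos (by omega)]
    simp only
    omega

private lemma F_sum (hno : Odd n) : ∑ v, F m n v = m * (n + 1) / 2 := by
  obtain ⟨b, hb⟩ := hno
  rw [Fintype.sum_prod_type]
  have inner : ∀ i : ZMod m,
      (∑ j : ZMod n, F m n (i, j)) = (n + 1) / 2 := by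
    intro i
    set c : ZMod n := ((cc m n i.val : ℕ) : ZMod n) with hc
    have : (∑ j : ZMod n, F m n (i, j))
        = ∑ x : ZMod n, (if x.val % 2 = 0 then 1 else 0) := by
      apply Fintype.sum_equiv (Equiv.subRight c)
      intro j
      rfl
    rw [this, ← zmod_even_card n, Finset.card_filter]
  rw [Finset.sum_congr rfl fun i _ => inner i, Finset.sum_const, Finset.card_univ, ZMod.card,
    smul_eq_mul, Nat.mul_div_assoc m ⟨b + 1, by omega⟩]
end upper2



open Finset in
private lemma lower_bound (m n : ℕ) [NeZero m] [NeZero n] (hno : Odd n)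
    (f : ZMod m × ZMod n → ℕ) (hf : ItalianDF f) :
    m * (n + 1) ≤ 2 * ∑ v, f v := by
  classical
  set Pc : ZMod m → ℕ := fun i => (univ.filter fun j : ZMod n => f (i, j) ≠ 0).card with hPc
  set Tc : ZMod m → ℕ := fun i => (univ.filter fun j : ZMod n => 2 ≤ f (i, j)).card with hTc
  have row : ∀ i : ZMod m, n + 1 ≤ 2 * Pc i + 2 * Tc (i - 1) := by
    intro i
    set Z : Finset (ZMod n) := univ.filter fun j : ZMod n => f (i, j) = 0 with hZ
    have hPZ : Z.card + Pc i = n := by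
      rw [hZ, hPc]
      rw [Finset.card_filter_add_card_filter_not
        (p := fun j : ZMod n => f (i, j) = 0)]
      simp [ZMod.card]
    set Z2 : Finset (ZMod n) := Z.filter fun j => f (i, j - 1) = 0 with hZ2
    set Z1 : Finset (ZMod n) := Z.filter fun j => ¬ f (i, j - 1) = 0 with hZ1
    have hsplit : Z2.card + Z1.card = Z.card := by
      rw [hZ2, hZ1]
      exact Finset.card_filter_add_card_filter_not
        (p := fun j : ZMod n => f (i, j - 1) = 0)
    have h1 : Z1.card ≤ Pc i := by
      apply Finset.card_le_card_of_injOn (fun j => j - 1)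
      · intro j hj
        simp only [hZ1, hZ, Finset.mem_coe, Finset.mem_filter, Finset.mem_univ, true_and] at hj ⊢
        exact hj.2
      · intro a _ b _ h
        exact sub_left_inj.mp h
    have h2 : Z2.card ≤ Tc (i - 1) := by
      apply Finset.card_le_card
      intro j hj
      simp only [hZ2, hZ, Finset.mem_filter, Finset.mem_univ, true_and] at hj ⊢
      have := hf.2 (i, j) hj.1
      simp only at this
      omega
    obtain ⟨k, hk⟩ := hno
    omega
  have sum_row : ∑ i : ZMod m, (n + 1) ≤ ∑ i : ZMod m, (2 * Pc i + 2 * Tc (i - 1)) :=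
    Finset.sum_le_sum fun i _ => row i
  have hshift : ∑ i : ZMod m, Tc (i - 1) = ∑ i : ZMod m, Tc i :=
    Fintype.sum_equiv (Equiv.subRight (1 : ZMod m)) _ _ fun i => rfl
  have hcount : ∀ i : ZMod m, Pc i + Tc i ≤ ∑ j : ZMod n, f (i, j) := by
    intro i
    rw [hPc, hTc]
    simp only
    rw [Finset.card_filter, Finset.card_filter, ← Finset.sum_add_distrib]
    apply Finset.sum_le_sum
    intro j _
    split_ifs <;> omega
  have hm : ∑ i : ZMod m, (n + 1) = m * (n + 1) := by
    rw [Finset.sum_const, Finset.card_univ, ZMod.card, smul_eq_mul]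
  have htot : ∑ v : ZMod m × ZMod n, f v = ∑ i : ZMod m, ∑ j : ZMod n, f (i, j) := by
    rw [Fintype.sum_prod_type]
  calc m * (n + 1) = ∑ i : ZMod m, (n + 1) := hm.symm
    _ ≤ ∑ i : ZMod m, (2 * Pc i + 2 * Tc (i - 1)) := sum_row
    _ = ∑ i : ZMod m, 2 * Pc i + ∑ i : ZMod m, 2 * Tc (i - 1) := Finset.sum_add_distrib
    _ = ∑ i : ZMod m, 2 * Pc i + ∑ i : ZMod m, 2 * Tc i := by
        rw [Fintype.sum_equiv (Equiv.subRight (1 : ZMod m))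
          (fun i => 2 * Tc (i - 1)) (fun i => 2 * Tc i) (fun i => rfl)]
    _ = 2 * ∑ i : ZMod m, (Pc i + Tc i) := by
        rw [Finset.mul_sum, ← Finset.sum_add_distrib]
        exact Finset.sum_congr rfl fun i _ => by ring
    _ ≤ 2 * ∑ i : ZMod m, ∑ j : ZMod n, f (i, j) :=
        Nat.mul_le_mul_left 2 (Finset.sum_le_sum fun i _ => hcount i)
    _ = 2 * ∑ v, f v := by rw [htot]

theorem stmt8 (m n : ℕ) [NeZero m] [NeZero n] (hn : 3 ≤ n) (hmn : n ≤ m)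
    (hmo : Odd m) (hno : Odd n) :
    IsLeast (weights m n) (m * (n + 1) / 2) := by
  constructor
  · exact ⟨F m n, F_IDF m n hn hmn hmo hno, F_sum m n hno⟩
  · rintro w ⟨f, hf, rfl⟩
    have := lower_bound m n hno f hf
    omega
end

section
/- For integers m, n ≥ 2, there exists a minimum-weight Italian dominating function of the directed Cartesian product C_m □ C_n in which no two vertices assigned 0 are adjacent in the underlying toroidal grid graph. -/
open Finset

namespace TorusIDF
variable {m : ℕ} [NeZero m]

def wsum (c : ZMod m → ℕ) : ℕ := ∑ i, c i
def nz (c : ZMod m → ℕ) : ℕ := (univ.filter fun i => c i = 0).card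
def nzz (c : ZMod m → ℕ) : ℕ := (univ.filter fun i => c (i-1) = 0 ∧ c i = 0).card
def nt (c : ZMod m → ℕ) : ℕ := (univ.filter fun i => c i = 2).card
def nts (c : ZMod m → ℕ) : ℕ := (univ.filter fun i => c (i-1) = 2 ∧ c i ≠ 0).card
def lower (b : ZMod m → ℕ) (i : ZMod m) : ℕ := if b i = 0 then 2 - b (i-1) else 0
def slack (a b : ZMod m → ℕ) : ℕ := ∑ i, (a i - lower b i)

/-- q-potential on columns; `h = (m-1)/2`. -/
def qpot (h : ℕ) (c : ZMod m → ℕ) : ℕ :=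
  if nzz c = 0 ∧ nts c = 0 ∧ nz c = h ∧ nt c = 0 then 0
  else if (nzz c = 0 ∧ nts c = 0) ∨ (nzz c = 0 ∧ nts c = 1 ∧ nz c = h ∧ nt c = 1)
      ∨ (nzz c = 1 ∧ nts c = 0 ∧ nz c = h + 1 ∧ nt c = 0) then 1
  else 2

lemma card_shift (c : ZMod m → ℕ) (P : ℕ → Prop) [DecidablePred P] :
    (univ.filter fun i => P (c (i-1))).card = (univ.filter fun i => P (c i)).card := by
  apply Finset.card_bij' (fun i _ => i - 1) (fun i _ => i + 1) <;> simp

lemma sum_shift (c : ZMod m → ℕ) : ∑ i, c (i-1) = ∑ i, c i :=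
  Fintype.sum_equiv (Equiv.subRight 1) _ _ (fun _ => rfl)

section pairsec
variable (a b : ZMod m → ℕ)

-- abbreviations for transition counts
def n0S : ℕ := (univ.filter fun i => b (i-1) = 0 ∧ b i ≠ 0).card
def nS0 : ℕ := (univ.filter fun i => b (i-1) ≠ 0 ∧ b i = 0).card

lemma split1 : nzz b + n0S b = nz b := by
  have e := Finset.card_filter_add_card_filter_not
    (s := univ.filter (fun i : ZMod m => b (i-1) = 0)) (p := fun i => b i = 0)
  rw [Finset.filter_filter, Finset.filter_filter] at e
  have e1 : (univ.filter fun i : ZMod m => b (i-1) = 0 ∧ b i = 0)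
      = univ.filter fun a : ZMod m => b (a-1) = 0 ∧ b a = 0 := rfl
  have e2 : (univ.filter fun i : ZMod m => b (i-1) = 0 ∧ b i ≠ 0)
      = univ.filter fun a : ZMod m => b (a-1) = 0 ∧ ¬ b a = 0 := rfl
  rw [nzz, n0S, nz, ← card_shift b (fun x => x = 0), e1, e2, e]

lemma split2 : nzz b + nS0 b = nz b := by
  have e := Finset.card_filter_add_card_filter_not
    (s := univ.filter (fun i : ZMod m => b i = 0)) (p := fun i => b (i-1) = 0)
  rw [Finset.filter_filter, Finset.filter_filter] at e
  have e1 : (univ.filter fun i : ZMod m => b (i-1) = 0 ∧ b i = 0)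
      = univ.filter fun a : ZMod m => b a = 0 ∧ b (a-1) = 0 := by
    ext i; simp; tauto
  have e2 : (univ.filter fun i : ZMod m => b (i-1) ≠ 0 ∧ b i = 0)
      = univ.filter fun a : ZMod m => b a = 0 ∧ ¬ b (a-1) = 0 := by
    ext i; simp; tauto
  rw [nzz, nS0, nz, e1, e2, e]

lemma trans_eq : n0S b = nS0 b := by
  have h1 := split1 b
  have h2 := split2 b
  omega

lemma P1 : 2 * nz b ≤ m + nzz b := by
  have h2 := split2 b
  have h3 : nz b + n0S b ≤ m := by
    have hd : Disjoint (univ.filter fun i : ZMod m => b i = 0)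
        (univ.filter fun i => b (i-1) = 0 ∧ b i ≠ 0) := by
      rw [Finset.disjoint_left]
      intro i hi hi2
      simp at hi hi2
      exact hi2.2 hi
    calc nz b + n0S b = ((univ.filter fun i : ZMod m => b i = 0) ∪ (univ.filter fun i => b (i-1) = 0 ∧ b i ≠ 0)).card := (Finset.card_union_of_disjoint hd).symm
      _ ≤ (univ : Finset (ZMod m)).card := Finset.card_le_card (by simp [Finset.union_subset])
      _ = m := by simp [ZMod.card]
  have h4 := trans_eq b
  omega

lemma P2 : nts b ≤ nt b := by
  rw [nts, nt, ← card_shift b (fun x => x = 2)]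
  apply Finset.card_le_card
  intro i hi; simp at hi ⊢; exact hi.1

end pairsec

lemma card_le_sum (g : ZMod m → ℕ) : (univ.filter fun i => 1 ≤ g i).card ≤ ∑ i, g i := by
  calc (univ.filter fun i => 1 ≤ g i).card
      = ∑ i ∈ univ.filter (fun i => 1 ≤ g i), 1 := by simp
    _ ≤ ∑ i ∈ univ.filter (fun i => 1 ≤ g i), g i := Finset.sum_le_sum (fun i hi => by simp at hi; omega)
    _ ≤ ∑ i, g i := Finset.sum_le_sum_of_subset (Finset.filter_subset _ _)

section mainpair
variable (a b : ZMod m → ℕ)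

lemma sumlow (hdom : ∀ i, b i = 0 → 2 ≤ a i + b (i-1)) :
    wsum a = (∑ i, lower b i) + slack a b := by
  rw [slack, ← Finset.sum_add_distrib]
  apply Finset.sum_congr rfl
  intro i _
  have : lower b i ≤ a i := by
    by_cases hbi : b i = 0
    · have := hdom i hbi
      simp only [lower, if_pos hbi]
      omega
    · simp [lower, hbi]
  omega

lemma H1 (hb : ∀ i, b i ≤ 2) (hdom : ∀ i, b i = 0 → 2 ≤ a i + b (i-1)) :
    m + nzz b + nts b + slack a b ≤ wsum a + wsum b := by
  have key : ∀ i : ZMod m,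
      (1 + ((if (b (i-1) = 0 ∧ b i = 0) then (1:ℕ) else 0) +
        ((if (b (i-1) = 2 ∧ b i ≠ 0) then (1:ℕ) else 0) +
         (if (b (i-1) ≠ 0 ∧ b i = 0) then (1:ℕ) else 0)))) ≤
      lower b i + (b (i-1) + (if (b (i-1) = 0 ∧ b i ≠ 0) then (1:ℕ) else 0)) := by
    intro i
    have h1 := hb i
    have h2 := hb (i-1)
    unfold lower
    split_ifs <;> omega
  have hsum := Finset.sum_le_sum (fun i (_ : i ∈ univ) => key i)
  rw [Finset.sum_add_distrib, Finset.sum_add_distrib, Finset.sum_add_distrib,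
      Finset.sum_add_distrib, Finset.sum_add_distrib] at hsum
  simp only [Finset.sum_boole, Nat.cast_id] at hsum
  have hm : ∑ _i : ZMod m, (1:ℕ) = m := by simp [ZMod.card]
  rw [sum_shift b] at hsum
  have htr := trans_eq b
  have hws := sumlow a b hdom
  simp only [wsum, nzz, nts, n0S, nS0] at *
  omega

lemma H2 (ha : ∀ i, a i ≤ 2) (hdom : ∀ i, b i = 0 → 2 ≤ a i + b (i-1)) :
    nzz b ≤ nt a := by
  apply Finset.card_le_card
  intro i hi
  simp only [Finset.mem_filter, Finset.mem_univ, true_and] at hi ⊢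
  have := hdom i hi.2
  have := ha i
  omega

lemma H3 (hdom : ∀ i, b i = 0 → 2 ≤ a i + b (i-1)) :
    nt a ≤ nzz b + slack a b := by
  have hsub : (univ.filter fun i => a i = 2) ⊆
      (univ.filter fun i : ZMod m => b (i-1) = 0 ∧ b i = 0) ∪
      (univ.filter fun i => 1 ≤ a i - lower b i) := by
    intro i hi
    simp only [Finset.mem_filter, Finset.mem_univ, true_and, Finset.mem_union] at hi ⊢
    by_cases hz : b (i-1) = 0 ∧ b i = 0
    · exact Or.inl hz
    · right
      have hl : lower b i ≤ 1 := by
        by_cases hbi : b i = 0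
        · simp only [lower, if_pos hbi]
          have : b (i-1) ≠ 0 := fun h => hz ⟨h, hbi⟩
          omega
        · simp [lower, hbi]
      omega
  calc nt a ≤ _ := Finset.card_le_card hsub
    _ ≤ _ + _ := Finset.card_union_le _ _
    _ ≤ nzz b + slack a b := by
      have := card_le_sum (fun i => a i - lower b i)
      rw [nzz, slack]; omega

def nL0 : ℕ := (univ.filter fun i => lower b i = 0).card

lemma H5 (hdom : ∀ i, b i = 0 → 2 ≤ a i + b (i-1)) : nz a ≤ nL0 b := by
  apply Finset.card_le_card
  intro i hi
  simp only [Finset.mem_filter, Finset.mem_univ, true_and] at hi ⊢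
  by_cases hbi : b i = 0
  · have := hdom i hbi
    simp only [lower, if_pos hbi]
    omega
  · simp [lower, hbi]

lemma H4 : nL0 b ≤ nz a + slack a b := by
  have hsub : (univ.filter fun i => lower b i = 0) ⊆
      (univ.filter fun i => a i = 0) ∪ (univ.filter fun i => 1 ≤ a i - lower b i) := by
    intro i hi
    simp only [Finset.mem_filter, Finset.mem_univ, true_and, Finset.mem_union] at hi ⊢
    omega
  calc nL0 b ≤ _ := Finset.card_le_card hsub
    _ ≤ _ + _ := Finset.card_union_le _ _
    _ ≤ nz a + slack a b := by
      have := card_le_sum (fun i => a i - lower b i)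
      rw [nz, slack]; omega

lemma hL0 (hb : ∀ i, b i ≤ 2) : nL0 b + nz b + nts b = m + nt b := by
  -- {lower = 0} = {b i ≠ 0} ⊔ {b i = 0 ∧ b (i-1) = 2}
  have e1 : (univ.filter fun i => lower b i = 0)
      = (univ.filter fun i : ZMod m => b i ≠ 0) ∪ (univ.filter fun i => b (i-1) = 2 ∧ b i = 0) := by
    ext i
    have h2 := hb (i-1)
    simp only [Finset.mem_filter, Finset.mem_univ, true_and, Finset.mem_union, lower]
    by_cases hbi : b i = 0 <;> simp [hbi] <;> omega
  have hd : Disjoint (univ.filter fun i : ZMod m => b i ≠ 0)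
      (univ.filter fun i => b (i-1) = 2 ∧ b i = 0) := by
    rw [Finset.disjoint_left]
    intro i hi hi2
    simp at hi hi2
    exact hi hi2.2
  have e2 : nL0 b = (univ.filter fun i : ZMod m => b i ≠ 0).card
      + (univ.filter fun i : ZMod m => b (i-1) = 2 ∧ b i = 0).card := by
    rw [nL0, e1, Finset.card_union_of_disjoint hd]
  -- #{b i ≠ 0} + nz b = m
  have e3 : (univ.filter fun i : ZMod m => b i ≠ 0).card + nz b = m := by
    have := Finset.card_filter_add_card_filter_not
      (s := (univ : Finset (ZMod m))) (p := fun i => b i = 0)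
    rw [nz]
    simp only [Finset.card_univ, ZMod.card] at this
    rw [show (univ.filter fun a : ZMod m => ¬ b a = 0) = (univ.filter fun i : ZMod m => b i ≠ 0) from rfl] at this
    omega
  -- n20 + nts = nt
  have e4 : (univ.filter fun i : ZMod m => b (i-1) = 2 ∧ b i = 0).card + nts b = nt b := by
    have e := Finset.card_filter_add_card_filter_not
      (s := univ.filter (fun i : ZMod m => b (i-1) = 2)) (p := fun i => b i = 0)
    rw [Finset.filter_filter, Finset.filter_filter] at e
    have e5 : (univ.filter fun i : ZMod m => b (i-1) = 2 ∧ b i = 0)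
        = univ.filter fun i : ZMod m => b (i-1) = 2 ∧ b i = 0 := rfl
    have e6 : (univ.filter fun i : ZMod m => b (i-1) = 2 ∧ b i ≠ 0)
        = univ.filter fun a_1 : ZMod m => b (a_1-1) = 2 ∧ ¬ b a_1 = 0 := rfl
    rw [nts, nt, ← card_shift b (fun x => x = 2), e6, e]
  omega

set_option maxHeartbeats 1000000 in
theorem pair_ineq (h : ℕ) (hm : m = 2*h + 1)
    (ha : ∀ i, a i ≤ 2) (hb : ∀ i, b i ≤ 2)
    (hdom : ∀ i, b i = 0 → 2 ≤ a i + b (i-1)) :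
    m + 1 + qpot h b ≤ wsum a + wsum b + qpot h a := by
  have hH1 := H1 a b hb hdom
  have hH2 := H2 a b ha hdom
  have hH3 := H3 a b hdom
  have hH4 := H4 a b
  have hH5 := H5 a b hdom
  have hL := hL0 b hb
  have hP1a := P1 a
  have hP1b := P1 b
  have hP2b := P2 b
  unfold qpot
  split_ifs <;> omega

end mainpair

end TorusIDF

open TorusIDF

section Global
variable {m n : ℕ} [NeZero m] [NeZero n]

/-- the `j`-th column of `f`. -/
def col (f : ZMod m × ZMod n → ℕ) (j : ZMod n) : ZMod m → ℕ := fun i => f (i, j)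

lemma sum_cols (f : ZMod m × ZMod n → ℕ) : ∑ v, f v = ∑ j : ZMod n, wsum (col f j) := by
  rw [Fintype.sum_prod_type]
  exact Finset.sum_comm

lemma col_dom (f : ZMod m × ZMod n → ℕ) (hf : ItalianDF f) (j : ZMod n) :
    ∀ i, (col f j) i = 0 → 2 ≤ (col f (j-1)) i + (col f j) (i-1) := by
  intro i hi
  have := hf.2 (i, j) hi
  simpa [col, add_comm] using this

lemma lb_basic (f : ZMod m × ZMod n → ℕ) (hf : ItalianDF f) :
    n * m ≤ 2 * ∑ v, f v := by
  have key : ∀ j : ZMod n, m ≤ wsum (col f (j-1)) + wsum (col f j) := by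
    intro j
    have := H1 (col f (j-1)) (col f j) (fun i => hf.1 _) (col_dom f hf j)
    omega
  have hsum := Finset.sum_le_sum (fun j (_ : j ∈ (univ : Finset (ZMod n))) => key j)
  simp only [Finset.sum_add_distrib] at hsum
  rw [sum_shift (fun j => wsum (col f j))] at hsum
  simp only [Finset.sum_const, Finset.card_univ, ZMod.card, smul_eq_mul] at hsum
  rw [sum_cols f]
  omega

lemma lb_odd (h : ℕ) (hmh : m = 2*h + 1) (f : ZMod m × ZMod n → ℕ) (hf : ItalianDF f) :
    n * (2*h + 2) ≤ 2 * ∑ v, f v := by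
  have key : ∀ j : ZMod n, m + 1 + qpot h (col f j)
      ≤ wsum (col f (j-1)) + wsum (col f j) + qpot h (col f (j-1)) := by
    intro j
    exact pair_ineq (col f (j-1)) (col f j) h hmh (fun i => hf.1 _) (fun i => hf.1 _)
      (col_dom f hf j)
  have hsum := Finset.sum_le_sum (fun j (_ : j ∈ (univ : Finset (ZMod n))) => key j)
  simp only [Finset.sum_add_distrib] at hsum
  rw [sum_shift (fun j => wsum (col f j)), sum_shift (fun j => qpot h (col f j))] at hsum
  simp only [Finset.sum_const, Finset.card_univ, ZMod.card, smul_eq_mul] at hsum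
  rw [sum_cols f]
  have hexp : n * m + n = n * (2*h + 2) := by subst hmh; ring
  omega

end Global

section EvenConstr
variable {m n : ℕ} [NeZero m] [NeZero n]

lemma parity_flip (hm2 : 2 ≤ m) (hme : m % 2 = 0) (i : ZMod m) :
    (i+1).val % 2 ≠ i.val % 2 := by
  haveI : Fact (1 < m) := ⟨hm2⟩
  have hv : (i+1).val = (i.val + 1) % m := by
    rw [ZMod.val_add, ZMod.val_one]
  have h2 : ((i.val + 1) % m) % 2 = (i.val + 1) % 2 :=
    Nat.mod_mod_of_dvd _ ⟨m / 2, by omega⟩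
  rw [hv]
  omega

lemma parity_flip' (hm2 : 2 ≤ m) (hme : m % 2 = 0) (i : ZMod m) :
    (i-1).val % 2 ≠ i.val % 2 := by
  have := parity_flip hm2 hme (i-1)
  rw [sub_add_cancel] at this
  omega

/-- parity construction for both even -/
def fpar : ZMod m × ZMod n → ℕ := fun v => if v.1.val % 2 = v.2.val % 2 then 0 else 1

lemma fpar_IDF (hm2 : 2 ≤ m) (hn2 : 2 ≤ n) (hme : m % 2 = 0) (hne : n % 2 = 0) :
    ItalianDF (fpar (m := m) (n := n)) := by
  constructor
  · intro v; unfold fpar; split_ifs <;> omega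
  · intro v hv
    have hc : v.1.val % 2 = v.2.val % 2 := by
      by_contra hc; simp [fpar, hc] at hv
    have h1 := parity_flip' hm2 hme v.1
    have h2 := parity_flip' hn2 hne v.2
    simp only [fpar]
    split_ifs <;> omega

lemma fpar_indep (hm2 : 2 ≤ m) (hn2 : 2 ≤ n) (hme : m % 2 = 0) (hne : n % 2 = 0) :
    ∀ u v : ZMod m × ZMod n, fpar u = 0 → fpar v = 0 → ¬ Adj u v := by
  intro u v hu hv hadj
  have hu' : u.1.val % 2 = u.2.val % 2 := by
    by_contra hc; simp [fpar, hc] at hu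
  have hv' : v.1.val % 2 = v.2.val % 2 := by
    by_contra hc; simp [fpar, hc] at hv
  rcases hadj with h | h | h | h
  · have h1 : v.1 = u.1 + 1 := by rw [h, Prod.fst_add]
    have h2 : v.2 = u.2 := by rw [h, Prod.snd_add, add_zero]
    have := parity_flip hm2 hme u.1
    rw [← h1] at this; rw [h2] at hv'; omega
  · have h1 : v.1 = u.1 := by rw [h, Prod.fst_add, add_zero]
    have h2 : v.2 = u.2 + 1 := by rw [h, Prod.snd_add]
    have := parity_flip hn2 hne u.2
    rw [← h2] at this; rw [h1] at hv'; omega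
  · have h1 : u.1 = v.1 + 1 := by rw [h, Prod.fst_add]
    have h2 : u.2 = v.2 := by rw [h, Prod.snd_add, add_zero]
    have := parity_flip hm2 hme v.1
    rw [← h1] at this; rw [h2] at hu'; omega
  · have h1 : u.1 = v.1 := by rw [h, Prod.fst_add, add_zero]
    have h2 : u.2 = v.2 + 1 := by rw [h, Prod.snd_add]
    have := parity_flip hn2 hne v.2
    rw [← h2] at this; rw [h1] at hu'; omega

lemma fpar_weight (hm2 : 2 ≤ m) (hme : m % 2 = 0) :
    2 * ∑ v, fpar (m := m) (n := n) v = m * n := by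
  classical
  have hsum : ∑ v, fpar (m := m) (n := n) v
      = (univ.filter fun v : ZMod m × ZMod n => ¬ (v.1.val % 2 = v.2.val % 2)).card := by
    have e : ∀ v : ZMod m × ZMod n, fpar v
        = if ¬ (v.1.val % 2 = v.2.val % 2) then 1 else 0 := by
      intro v
      by_cases hc : v.1.val % 2 = v.2.val % 2 <;> simp [fpar, hc]
    rw [Finset.sum_congr rfl (fun v _ => e v)]
    simp only [Finset.sum_boole, Nat.cast_id]
  have hcards : (univ.filter fun v : ZMod m × ZMod n => (v.1.val % 2 = v.2.val % 2)).card
      = (univ.filter fun v : ZMod m × ZMod n => ¬ (v.1.val % 2 = v.2.val % 2)).card := by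
    apply Finset.card_bij' (fun v _ => (v.1 + 1, v.2)) (fun v _ => (v.1 - 1, v.2))
    case hi =>
      intro v hv
      rw [Finset.mem_filter] at hv ⊢
      refine ⟨Finset.mem_univ _, ?_⟩
      have h1 := parity_flip hm2 hme v.1
      have h2 := hv.2
      show ¬ ((v.1 + 1).val % 2 = v.2.val % 2)
      omega
    case hj =>
      intro v hv
      rw [Finset.mem_filter] at hv ⊢
      refine ⟨Finset.mem_univ _, ?_⟩
      have h1 := parity_flip' hm2 hme v.1
      have h2 := hv.2
      show ((v.1 - 1).val % 2 = v.2.val % 2)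
      omega
    case left_inv =>
      intro v _
      show ((v.1 + 1) - 1, v.2) = v
      simp
    case right_inv =>
      intro v _
      show ((v.1 - 1) + 1, v.2) = v
      simp
  have htot := Finset.card_filter_add_card_filter_not
    (s := (univ : Finset (ZMod m × ZMod n)))
    (p := fun v : ZMod m × ZMod n => (v.1.val % 2 = v.2.val % 2))
  simp only [Finset.card_univ, Fintype.card_prod, ZMod.card] at htot
  omega

end EvenConstr


section OddConstr
variable {m n : ℕ} [NeZero m] [NeZero n]

def xpar (m n : ℕ) : ℕ := if n % 2 = 0 then n / 2 else (n + m) / 2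

def cf (m n : ℕ) (t : ℕ) : ℕ := if t ≤ xpar m n then t else 2 * xpar m n - t

def csh (m : ℕ) [NeZero m] (j : ZMod n) : ZMod m := ((cf m n j.val : ℕ) : ZMod m)

lemma xpar_facts (hmo : m % 2 = 1) (hn : 2 ≤ n) (hcase : n % 2 = 0 ∨ m ≤ n) :
    ((2 * xpar m n = n ∧ n % 2 = 0) ∨ (2 * xpar m n = n + m ∧ n % 2 = 1 ∧ m ≤ n))
      ∧ 1 ≤ xpar m n ∧ n ≤ 2 * xpar m n := by
  unfold xpar
  rcases Nat.even_or_odd n with he | ho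
  · have h0 : n % 2 = 0 := Nat.even_iff.mp he
    rw [if_pos h0]
    omega
  · have h1 : n % 2 = 1 := Nat.odd_iff.mp ho
    have hmn : m ≤ n := by
      rcases hcase with h | h
      · omega
      · exact h
    rw [if_neg (by omega)]
    omega

lemma csh_step (hmo : m % 2 = 1) (hm2 : 2 ≤ m) (hn : 2 ≤ n)
    (hcase : n % 2 = 0 ∨ m ≤ n) (j : ZMod n) :
    csh m (j + 1) = csh m j + 1 ∨ csh m (j + 1) = csh m j - 1 := by
  haveI : Fact (1 < n) := ⟨hn⟩
  obtain ⟨hx0, hx1, hxn⟩ := xpar_facts (n := n) hmo hn hcase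
  set x := xpar m n with hxdef
  have hj : j.val < n := ZMod.val_lt j
  have hval : (j + 1).val = (j.val + 1) % n := by
    rw [ZMod.val_add, ZMod.val_one]
  by_cases hw : j.val + 1 < n
  · -- no wrap
    have hval' : (j + 1).val = j.val + 1 := by rw [hval, Nat.mod_eq_of_lt hw]
    by_cases h1 : j.val + 1 ≤ x
    · left
      show ((cf m n (j+1).val : ℕ) : ZMod m) = ((cf m n j.val : ℕ) : ZMod m) + 1
      rw [hval']
      rw [show cf m n (j.val+1) = j.val + 1 from by unfold cf; rw [if_pos h1]]
      rw [show cf m n j.val = j.val from by unfold cf; rw [if_pos (by omega)]]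
      push_cast
      ring
    · right
      show ((cf m n (j+1).val : ℕ) : ZMod m) = ((cf m n j.val : ℕ) : ZMod m) - 1
      rw [hval']
      have hc1 : cf m n (j.val+1) = 2*x - (j.val+1) := by unfold cf; rw [if_neg (by omega)]
      by_cases h2 : j.val ≤ x
      · have ht : j.val = x := by omega
        have hc2 : cf m n j.val = j.val := by unfold cf; rw [if_pos h2]
        rw [hc1, hc2, ht]
        rw [show 2*x - (x+1) = x - 1 from by omega]
        rw [Nat.cast_sub hx1]
        norm_cast
      · have hc2 : cf m n j.val = 2*x - j.val := by unfold cf; rw [if_neg h2]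
        rw [hc1, hc2]
        rw [show 2*x - (j.val+1) = (2*x - j.val) - 1 from by omega]
        rw [Nat.cast_sub (by omega)]
        norm_cast
  · -- wrap: j.val = n - 1
    have hje : j.val = n - 1 := by omega
    have hval' : (j + 1).val = 0 := by
      rw [hval]
      have h1 : j.val + 1 = n := by omega
      rw [h1, Nat.mod_self]
    have hlhs : csh m (j+1) = 0 := by
      show ((cf m n (j+1).val : ℕ) : ZMod m) = 0
      rw [hval']
      rw [show cf m n 0 = 0 from by unfold cf; rw [if_pos (by omega)]]
      exact Nat.cast_zero
    have hsuff : ((cf m n j.val : ℕ) : ZMod m) = 1 ∨ ((cf m n j.val : ℕ) : ZMod m) + 1 = 0 := by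
      by_cases hx : n - 1 ≤ x
      · have hc : cf m n j.val = n - 1 := by
          unfold cf; rw [hje, if_pos hx]
        rcases hx0 with ⟨h2x, hne⟩ | ⟨h2x, hno, hmn⟩
        · -- n even, n - 1 ≤ n/2 → n = 2
          have hn2 : n = 2 := by omega
          left
          rw [hc, hn2]
          exact Nat.cast_one
        · -- n odd, m ≤ n ≤ m + 2
          have : n = m ∨ n = m + 2 := by omega
          rcases this with hnm | hnm
          · right
            rw [hc, hnm]
            rw [show ((m - 1 : ℕ) : ZMod m) + 1 = (((m - 1) + 1 : ℕ) : ZMod m) from by push_cast; ring]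
            rw [show (m - 1) + 1 = m from by omega]
            exact ZMod.natCast_self m
          · left
            rw [hc, hnm]
            rw [show m + 2 - 1 = m + 1 from by omega]
            push_cast
            rw [ZMod.natCast_self m]
            ring
      · have hc : cf m n j.val = 2*x - (n-1) := by
          unfold cf; rw [hje, if_neg hx]
        rcases hx0 with ⟨h2x, hne⟩ | ⟨h2x, hno, hmn⟩
        · left
          rw [hc, show 2*x - (n-1) = 1 from by omega]
          exact Nat.cast_one
        · left
          rw [hc, show 2*x - (n-1) = m + 1 from by omega]
          push_cast
          rw [ZMod.natCast_self m]
          ring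
    rcases hsuff with h1 | h1
    · right
      rw [hlhs]
      show (0 : ZMod m) = ((cf m n j.val : ℕ) : ZMod m) - 1
      rw [h1]
      ring
    · left
      rw [hlhs]
      show (0 : ZMod m) = ((cf m n j.val : ℕ) : ZMod m) + 1
      rw [← h1]

def zcol (h : ℕ) (j : ZMod n) : Finset (ZMod m) :=
  (Finset.range h).image (fun k => ((2*k : ℕ) : ZMod m) + csh m j)

lemma no_consec (h : ℕ) (hm : m = 2*h+1) {k k' : ℕ} (hk : k < h) (hk' : k' < h) :
    ((2*k : ℕ) : ZMod m) ≠ ((2*k' : ℕ) : ZMod m) + 1 := by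
  intro he
  have he2 : ((2*k : ℕ) : ZMod m) = ((2*k'+1 : ℕ) : ZMod m) := by
    rw [he]; push_cast; ring
  have h1 : 2*k < m := by omega
  have h2 : 2*k'+1 < m := by omega
  have := congrArg ZMod.val he2
  rw [ZMod.val_cast_of_lt h1, ZMod.val_cast_of_lt h2] at this
  omega

lemma mem_zcol {h : ℕ} {j : ZMod n} {i : ZMod m} :
    i ∈ zcol h j ↔ ∃ k, k < h ∧ i = ((2*k : ℕ) : ZMod m) + csh m j := by
  unfold zcol
  simp only [Finset.mem_image, Finset.mem_range]
  constructor
  · rintro ⟨k, hk, he⟩; exact ⟨k, hk, he.symm⟩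
  · rintro ⟨k, hk, he⟩; exact ⟨k, hk, he.symm⟩

lemma zcol_vert (h : ℕ) (hm : m = 2*h+1) (j : ZMod n) (i : ZMod m) :
    i ∈ zcol h j → i + 1 ∈ zcol h j → False := by
  intro h1 h2
  obtain ⟨k, hk, he⟩ := mem_zcol.mp h1
  obtain ⟨k', hk', he'⟩ := mem_zcol.mp h2
  rw [he] at he'
  -- 2k + c + 1 = 2k' + c
  have : ((2*k' : ℕ) : ZMod m) = ((2*k : ℕ) : ZMod m) + 1 := by
    have := he'.symm
    calc ((2*k' : ℕ) : ZMod m) = ((2*k' : ℕ) : ZMod m) + csh m j - csh m j := by ring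
      _ = ((2*k : ℕ) : ZMod m) + csh m j + 1 - csh m j := by rw [← he']
      _ = ((2*k : ℕ) : ZMod m) + 1 := by ring
  exact no_consec h hm hk' hk this

lemma zcol_step (h : ℕ) (hm : m = 2*h+1) (hmo : m % 2 = 1) (hm2 : 2 ≤ m) (hn : 2 ≤ n)
    (hcase : n % 2 = 0 ∨ m ≤ n) (j : ZMod n) (i : ZMod m) :
    i ∈ zcol h j → i ∈ zcol h (j+1) → False := by
  intro h1 h2
  obtain ⟨k, hk, he⟩ := mem_zcol.mp h1
  obtain ⟨k', hk', he'⟩ := mem_zcol.mp h2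
  rcases csh_step hmo hm2 hn hcase j with hs | hs
  · -- csh (j+1) = csh j + 1 : 2k + c = 2k' + c + 1
    rw [hs] at he'
    have : ((2*k : ℕ) : ZMod m) = ((2*k' : ℕ) : ZMod m) + 1 := by
      have h3 : ((2*k : ℕ) : ZMod m) + csh m j = ((2*k' : ℕ) : ZMod m) + (csh m j + 1) := by
        rw [← he, ← he']
      calc ((2*k : ℕ) : ZMod m) = ((2*k : ℕ) : ZMod m) + csh m j - csh m j := by ring
        _ = ((2*k' : ℕ) : ZMod m) + (csh m j + 1) - csh m j := by rw [h3]
        _ = ((2*k' : ℕ) : ZMod m) + 1 := by ring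
    exact no_consec h hm hk hk' this
  · -- csh (j+1) = csh j - 1 : 2k + c = 2k' + c - 1
    rw [hs] at he'
    have : ((2*k' : ℕ) : ZMod m) = ((2*k : ℕ) : ZMod m) + 1 := by
      have h3 : ((2*k : ℕ) : ZMod m) + csh m j = ((2*k' : ℕ) : ZMod m) + (csh m j - 1) := by
        rw [← he, ← he']
      calc ((2*k' : ℕ) : ZMod m) = ((2*k' : ℕ) : ZMod m) + (csh m j - 1) - csh m j + 1 := by ring
        _ = ((2*k : ℕ) : ZMod m) + csh m j - csh m j + 1 := by rw [h3]
        _ = ((2*k : ℕ) : ZMod m) + 1 := by ring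
    exact no_consec h hm hk' hk this

def fodd (h : ℕ) : ZMod m × ZMod n → ℕ := fun v => if v.1 ∈ zcol h v.2 then 0 else 1

lemma fodd_zero {h : ℕ} {v : ZMod m × ZMod n} (hv : fodd h v = 0) : v.1 ∈ zcol h v.2 := by
  by_contra hc
  simp [fodd, hc] at hv

lemma fodd_indep (h : ℕ) (hm : m = 2*h+1) (hmo : m % 2 = 1) (hm2 : 2 ≤ m) (hn : 2 ≤ n)
    (hcase : n % 2 = 0 ∨ m ≤ n) :
    ∀ u v : ZMod m × ZMod n, fodd h u = 0 → fodd h v = 0 → ¬ Adj u v := by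
  intro u v hu hv hadj
  have hu' := fodd_zero hu
  have hv' := fodd_zero hv
  rcases hadj with he | he | he | he
  · have h1 : v.1 = u.1 + 1 := by rw [he, Prod.fst_add]
    have h2 : v.2 = u.2 := by rw [he, Prod.snd_add, add_zero]
    rw [h1, h2] at hv'
    exact zcol_vert h hm u.2 u.1 hu' hv'
  · have h1 : v.1 = u.1 := by rw [he, Prod.fst_add, add_zero]
    have h2 : v.2 = u.2 + 1 := by rw [he, Prod.snd_add]
    rw [h1, h2] at hv'
    exact zcol_step h hm hmo hm2 hn hcase u.2 u.1 hu' hv'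
  · have h1 : u.1 = v.1 + 1 := by rw [he, Prod.fst_add]
    have h2 : u.2 = v.2 := by rw [he, Prod.snd_add, add_zero]
    rw [h1, h2] at hu'
    exact zcol_vert h hm v.2 v.1 hv' hu'
  · have h1 : u.1 = v.1 := by rw [he, Prod.fst_add, add_zero]
    have h2 : u.2 = v.2 + 1 := by rw [he, Prod.snd_add]
    rw [h1, h2] at hu'
    exact zcol_step h hm hmo hm2 hn hcase v.2 v.1 hv' hu'

lemma fodd_IDF (h : ℕ) (hm : m = 2*h+1) (hmo : m % 2 = 1) (hm2 : 2 ≤ m) (hn : 2 ≤ n)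
    (hcase : n % 2 = 0 ∨ m ≤ n) : ItalianDF (fodd (m := m) (n := n) h) := by
  constructor
  · intro v; unfold fodd; split_ifs <;> omega
  · intro v hv
    have hv' := fodd_zero hv
    have e1 : fodd (m := m) (n := n) h (v.1 - 1, v.2) = 1 := by
      unfold fodd
      rw [if_neg]
      intro hc
      have : (v.1 - 1) + 1 ∈ zcol h v.2 := by
        rw [sub_add_cancel]
        exact hv'
      exact zcol_vert h hm v.2 (v.1 - 1) hc this
    have e2 : fodd (m := m) (n := n) h (v.1, v.2 - 1) = 1 := by
      unfold fodd
      rw [if_neg]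
      intro hc
      have h2 : v.1 ∈ zcol h ((v.2 - 1) + 1) := by
        rw [sub_add_cancel]
        exact hv'
      exact zcol_step h hm hmo hm2 hn hcase (v.2 - 1) v.1 hc h2
    rw [e1, e2]

lemma fodd_weight (h : ℕ) (hm : m = 2*h+1) :
    ∑ v, fodd (m := m) (n := n) h v = n * (h + 1) := by
  have hcol : ∀ j : ZMod n, ∑ i : ZMod m, fodd (m := m) (n := n) h (i, j) = h + 1 := by
    intro j
    have hcard : (zcol (m := m) h j).card = h := by
      unfold zcol
      rw [Finset.card_image_of_injOn, Finset.card_range]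
      intro k hk k' hk' he
      have hk2 : k < h := by simpa using hk
      have hk2' : k' < h := by simpa using hk'
      simp only at he
      have he2 : ((2*k : ℕ) : ZMod m) = ((2*k' : ℕ) : ZMod m) := by
        calc ((2*k : ℕ) : ZMod m) = ((2*k : ℕ) : ZMod m) + csh m j - csh m j := by ring
          _ = ((2*k' : ℕ) : ZMod m) + csh m j - csh m j := by rw [he]
          _ = ((2*k' : ℕ) : ZMod m) := by ring
      have := congrArg ZMod.val he2
      rw [ZMod.val_cast_of_lt (by omega), ZMod.val_cast_of_lt (by omega)] at this
      omega
    have e : ∀ i : ZMod m, fodd (m := m) (n := n) h (i, j)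
        = if ¬ (i ∈ zcol h j) then 1 else 0 := by
      intro i
      by_cases hc : i ∈ zcol h j <;> simp [fodd, hc]
    rw [Finset.sum_congr rfl (fun i _ => e i)]
    simp only [Finset.sum_boole, Nat.cast_id]
    have := Finset.card_filter_add_card_filter_not
      (s := (univ : Finset (ZMod m))) (p := fun i => i ∈ zcol h j)
    have hfe : (univ.filter (fun i : ZMod m => i ∈ zcol h j)) = zcol h j := by
      ext i; simp
    rw [hfe] at this
    simp only [Finset.card_univ, ZMod.card] at this
    omega
  rw [Fintype.sum_prod_type, Finset.sum_comm]
  rw [Finset.sum_congr rfl (fun j _ => hcol j)]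
  simp [Finset.sum_const, Finset.card_univ, ZMod.card, mul_comm]

end OddConstr



section Assemble
variable {m n : ℕ} [NeZero m] [NeZero n]

lemma one_IDF : ItalianDF (fun _ : ZMod m × ZMod n => 1) := by
  constructor
  · intro v; show (1:ℕ) ≤ 2; omega
  · intro v hv; exact absurd hv one_ne_zero

lemma weights_nonempty : (weights m n).Nonempty := ⟨_, ⟨_, one_IDF, rfl⟩⟩

lemma swap_IDF (g : ZMod n × ZMod m → ℕ) (hg : ItalianDF g) :
    ItalianDF (fun v : ZMod m × ZMod n => g (v.2, v.1)) := by
  constructor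
  · intro v; exact hg.1 _
  · intro v hv
    have := hg.2 (v.2, v.1) hv
    simp only at this ⊢
    omega

lemma swap_sum (g : ZMod n × ZMod m → ℕ) :
    ∑ v : ZMod m × ZMod n, g (v.2, v.1) = ∑ w, g w :=
  Fintype.sum_equiv (Equiv.prodComm _ _) _ _ (fun _ => rfl)

lemma weights_swap : weights m n = weights n m := by
  ext w
  constructor
  · rintro ⟨f, hf, rfl⟩
    exact ⟨fun v => f (v.2, v.1), swap_IDF f hf, swap_sum f⟩
  · rintro ⟨f, hf, rfl⟩
    exact ⟨fun v => f (v.2, v.1), swap_IDF f hf, swap_sum f⟩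

lemma Adj_swap {u v : ZMod m × ZMod n} (h : Adj u v) :
    Adj (u.2, u.1) (v.2, v.1) := by
  rcases h with he | he | he | he
  · right; left
    have h1 : v.1 = u.1 + 1 := by rw [he, Prod.fst_add]
    have h2 : v.2 = u.2 := by rw [he, Prod.snd_add, add_zero]
    show (v.2, v.1) = (u.2, u.1) + (0, 1)
    rw [Prod.mk_add_mk, Prod.mk.injEq]
    exact ⟨by rw [h2, add_zero], by rw [h1]⟩
  · left
    have h1 : v.1 = u.1 := by rw [he, Prod.fst_add, add_zero]
    have h2 : v.2 = u.2 + 1 := by rw [he, Prod.snd_add]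
    show (v.2, v.1) = (u.2, u.1) + (1, 0)
    rw [Prod.mk_add_mk, Prod.mk.injEq]
    exact ⟨by rw [h2], by rw [h1, add_zero]⟩
  · right; right; right
    have h1 : u.1 = v.1 + 1 := by rw [he, Prod.fst_add]
    have h2 : u.2 = v.2 := by rw [he, Prod.snd_add, add_zero]
    show (u.2, u.1) = (v.2, v.1) + (0, 1)
    rw [Prod.mk_add_mk, Prod.mk.injEq]
    exact ⟨by rw [h2, add_zero], by rw [h1]⟩
  · right; right; left
    have h1 : u.1 = v.1 := by rw [he, Prod.fst_add, add_zero]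
    have h2 : u.2 = v.2 + 1 := by rw [he, Prod.snd_add]
    show (u.2, u.1) = (v.2, v.1) + (1, 0)
    rw [Prod.mk_add_mk, Prod.mk.injEq]
    exact ⟨by rw [h2], by rw [h1, add_zero]⟩

lemma transfer
    (H : ∃ f : ZMod n × ZMod m → ℕ, ItalianDF f ∧ ∑ v, f v = sInf (weights n m) ∧
      ∀ u v : ZMod n × ZMod m, f u = 0 → f v = 0 → ¬ Adj u v) :
    ∃ f : ZMod m × ZMod n → ℕ, ItalianDF f ∧ ∑ v, f v = sInf (weights m n) ∧
      ∀ u v : ZMod m × ZMod n, f u = 0 → f v = 0 → ¬ Adj u v := by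
  obtain ⟨g, hg, hgs, hgi⟩ := H
  refine ⟨fun v => g (v.2, v.1), swap_IDF g hg, ?_, ?_⟩
  · rw [swap_sum g, hgs, weights_swap]
  · intro u v hu hv hadj
    exact hgi (u.2, u.1) (v.2, v.1) hu hv (Adj_swap hadj)

theorem main_odd (hm2 : 2 ≤ m) (hn2 : 2 ≤ n) (hmo : m % 2 = 1)
    (hcase : n % 2 = 0 ∨ m ≤ n) :
    ∃ f : ZMod m × ZMod n → ℕ, ItalianDF f ∧ ∑ v, f v = sInf (weights m n) ∧
      ∀ u v : ZMod m × ZMod n, f u = 0 → f v = 0 → ¬ Adj u v := by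
  set h := m / 2 with hh
  have hm : m = 2*h+1 := by omega
  refine ⟨fodd h, fodd_IDF h hm hmo hm2 hn2 hcase, ?_,
    fodd_indep h hm hmo hm2 hn2 hcase⟩
  have hw := fodd_weight (n := n) h hm
  rw [hw]
  obtain ⟨g, hg, hgw⟩ := Nat.sInf_mem (weights_nonempty (m := m) (n := n))
  have hlb := lb_odd h hm g hg
  rw [hgw] at hlb
  have hub : sInf (weights m n) ≤ n * (h+1) :=
    Nat.sInf_le ⟨fodd h, fodd_IDF h hm hmo hm2 hn2 hcase, hw⟩
  have hr : n * (2*h+2) = 2 * (n * (h+1)) := by ring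
  omega

theorem main_even (hm2 : 2 ≤ m) (hn2 : 2 ≤ n) (hme : m % 2 = 0) (hne : n % 2 = 0) :
    ∃ f : ZMod m × ZMod n → ℕ, ItalianDF f ∧ ∑ v, f v = sInf (weights m n) ∧
      ∀ u v : ZMod m × ZMod n, f u = 0 → f v = 0 → ¬ Adj u v := by
  refine ⟨fpar, fpar_IDF hm2 hn2 hme hne, ?_, fpar_indep hm2 hn2 hme hne⟩
  have hw := fpar_weight (m := m) (n := n) hm2 hme
  obtain ⟨g, hg, hgw⟩ := Nat.sInf_mem (weights_nonempty (m := m) (n := n))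
  have hlb := lb_basic g hg
  rw [hgw] at hlb
  have hub : sInf (weights m n) ≤ ∑ v, fpar (m := m) (n := n) v :=
    Nat.sInf_le ⟨fpar, fpar_IDF hm2 hn2 hme hne, rfl⟩
  have hr : n * m = m * n := by ring
  omega

end Assemble

theorem stmt17 (m n : ℕ) [NeZero m] [NeZero n] (hm : 2 ≤ m) (hn : 2 ≤ n) :
    ∃ f : ZMod m × ZMod n → ℕ, ItalianDF f ∧ ∑ v, f v = sInf (weights m n) ∧
      ∀ u v : ZMod m × ZMod n, f u = 0 → f v = 0 → ¬ Adj u v := by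
  by_cases hmo : m % 2 = 1
  · by_cases hc : n % 2 = 0 ∨ m ≤ n
    · exact main_odd hm hn hmo hc
    · push_neg at hc
      exact transfer (main_odd hn hm (by omega) (Or.inr (by omega)))
  · by_cases hne : n % 2 = 0
    · exact main_even hm hn (by omega) hne
    · exact transfer (main_odd hn hm (by omega) (Or.inl (by omega)))
end
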